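/- Let λ be a cardinal with 2^{<λ} = λ, and suppose A ⊆ WO_λ satisfies sup{ot(<_x) : x ∈ A} = λ⁺ (i.e., the order types of well-orders coded by elements of A are unbounded in λ⁺). Then A is not a λ-analytic subset of the space λ→2. -/

import Mathlib

universe u
open Cardinal

/-- The canonical type of order type `λ` representing the cardinal `λ` as a set of "ordinals". -/
abbrev T (lam : Cardinal.{u}) : Type u := lam.ord.ToType

/-- The binary relation on `λ` coded by `z : λ → 2` via the pairing bijection `pair`:
`(a, b) ∈ E_z` iff `z ⟨a,b⟩ = 0` (we use `false` for `0`). -/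
def Ez {lam : Cardinal.{u}} (pair : T lam × T lam ≃ T lam) (z : T lam → Bool)
    (a b : T lam) : Prop := z (pair (a, b)) = false

/-- `z` codes a well-order of order type `α`: the relation `E_z` only relates elements of a set
`S` (its field), and restricted to `S` it is a well-order of order type `α`. -/
def codesWO {lam : Cardinal.{u}} (pair : T lam × T lam ≃ T lam) (z : T lam → Bool)
    (α : Ordinal.{u}) : Prop :=
  ∃ S : Set (T lam), (∀ a b : T lam, Ez pair z a b → a ∈ S ∧ b ∈ S) ∧
    ∃ hwo : IsWellOrder S (fun a b : S => Ez pair z a.1 b.1),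
      @Ordinal.type S (fun a b : S => Ez pair z a.1 b.1) hwo = α

/-- The bounded topology on the generalised Cantor space `λ → 2`: basic open sets are
determined by fixing the values on a bounded (initial) segment of `λ`. -/
def btop (lam : Cardinal.{u}) : TopologicalSpace (T lam → Bool) :=
  TopologicalSpace.generateFrom
    {V | ∃ (b : T lam) (s : T lam → Bool), V = {x | ∀ a : T lam, a < b → x a = s a}}

/-- `A` is a λ-analytic subset of `λ → 2`: it is a continuous image of a λ-Polish space,
i.e. of a completely metrizable space of weight `≤ λ`. -/
def IsLamAnalytic (lam : Cardinal.{u}) (A : Set (T lam → Bool)) : Prop :=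
  ∃ (Y : Type u) (tY : TopologicalSpace Y) (m : MetricSpace Y),
    m.toUniformSpace.toTopologicalSpace = tY ∧ @CompleteSpace Y m.toUniformSpace ∧
    (∃ B : Set (Set Y), @TopologicalSpace.IsTopologicalBasis Y tY B ∧ #B ≤ lam) ∧
    ∃ f : Y → (T lam → Bool), @Continuous Y _ tY (btop lam) f ∧ Set.range f = A

/-- A relation with no infinite descending sequences is well-founded. -/
private lemma wf_of_no_descending {α : Sort*} {r : α → α → Prop}
    (H : ∀ g : ℕ → α, ¬ ∀ k, r (g (k + 1)) (g k)) : WellFounded r := by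
  by_contra h
  have hex : ∃ a, ¬ Acc r a := by
    by_contra h'
    push_neg at h'
    exact h ⟨h'⟩
  obtain ⟨a, ha⟩ := hex
  have step : ∀ a, ¬ Acc r a → ∃ b, r b a ∧ ¬ Acc r b := by
    intro a ha
    by_contra hc
    push_neg at hc
    exact ha (Acc.intro a hc)
  choose nxt h1 h2 using step
  let g : ℕ → {x : α // ¬ Acc r x} := fun k =>
    Nat.rec ⟨a, ha⟩ (fun _ p => ⟨nxt p.1 p.2, h2 p.1 p.2⟩) k
  exact H (fun k => (g k).1) fun k => h1 _ _

/-- In the bounded topology, the fibers of evaluation at a coordinate are open. -/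
private lemma btop_fiber_open {lam : Cardinal.{u}} (hinf : ℵ₀ ≤ lam) (c : T lam) (v : Bool) :
    @IsOpen _ (btop lam) {x : T lam → Bool | x c = v} := by
  haveI : NoMaxOrder (T lam) := Cardinal.noMaxOrder hinf
  obtain ⟨b, hb⟩ := exists_gt c
  have heq : {x : T lam → Bool | x c = v} =
      ⋃₀ {V | ∃ s : T lam → Bool, s c = v ∧ V = {x | ∀ a : T lam, a < b → x a = s a}} := by
    ext x
    constructor
    · intro hx
      exact ⟨{y | ∀ a : T lam, a < b → y a = x a}, ⟨x, hx, rfl⟩, fun a _ => rfl⟩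
    · rintro ⟨V, ⟨s, hs, rfl⟩, hx⟩
      have := hx c hb
      simpa [this] using hs
  rw [heq]
  apply TopologicalSpace.GenerateOpen.sUnion
  rintro V ⟨s, _, rfl⟩
  exact TopologicalSpace.GenerateOpen.basic _ ⟨b, s, rfl⟩

/-- The rank of any point of a well-founded relation on a set of size `≤ λ` is `< ord λ⁺`. -/
private lemma rank_lt_ord_succ {Q : Type u} (R : Q → Q → Prop) [IsWellFounded Q R]
    {lam : Cardinal.{u}} (hinf : ℵ₀ ≤ lam) (hQ : #Q ≤ lam) (q : Q) :
    IsWellFounded.rank R q < (Order.succ lam).ord := by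
  induction q using IsWellFounded.induction R with
  | _ x IH =>
    rw [IsWellFounded.rank_eq]
    apply Ordinal.iSup_lt_ord
    · rw [(Cardinal.isRegular_succ hinf).cof_eq]
      exact lt_of_le_of_lt (le_trans (Cardinal.mk_subtype_le _) hQ) (Order.lt_succ lam)
    · rintro ⟨b, hb⟩
      exact (Cardinal.isSuccLimit_ord (hinf.trans (Order.le_succ _))).succ_lt (IH b hb)

/-- Boundedness Lemma, contrapositive form. If `2^{<λ} = λ` and
`A ⊆ WO_λ` codes well-orders of order types unbounded in `λ⁺`, then `A` is not
λ-analytic. -/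
theorem not_analytic_of_unbounded (lam : Cardinal.{u}) (hinf : ℵ₀ ≤ lam)
    (hsl : ∀ μ : Cardinal.{u}, μ < lam → (2 : Cardinal.{u}) ^ μ ≤ lam)
    (pair : T lam × T lam ≃ T lam) (A : Set (T lam → Bool))
    (hWO : ∀ z ∈ A, ∃ α : Ordinal.{u}, codesWO pair z α)
    (hUnb : ∀ β : Ordinal.{u}, β < (Order.succ lam).ord →
      ∃ z ∈ A, ∃ α : Ordinal.{u}, β ≤ α ∧ codesWO pair z α) :
    ¬ IsLamAnalytic lam A := by
  rintro ⟨Y, tY, m, hmt, hcomp, ⟨B, hB, hBcard⟩, f, hf, hrange⟩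
  subst hmt
  letI : MetricSpace Y := m
  haveI : CompleteSpace Y := hcomp
  -- a dense family of points, indexed by the nonempty basic sets
  let ι := {s : Set Y // s ∈ B ∧ s.Nonempty}
  let pt : ι → Y := fun i => i.2.2.choose
  have hpt : ∀ i : ι, pt i ∈ i.1 := fun i => i.2.2.choose_spec
  have hdense : ∀ (w : Y) (ε : ℝ), 0 < ε → ∃ i : ι, dist w (pt i) < ε := by
    intro w ε hε
    obtain ⟨v, hvB, hwv, hsub⟩ :=
      hB.exists_subset_of_mem_open (Metric.mem_ball_self hε) Metric.isOpen_ball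
    refine ⟨⟨v, hvB, ⟨w, hwv⟩⟩, ?_⟩
    have := hsub (hpt ⟨v, hvB, ⟨w, hwv⟩⟩)
    rw [Metric.mem_ball] at this
    rwa [dist_comm]
  -- the λ-sized set of approximations and the key relation
  let Q : Type u := ι × ℕ × T lam
  let R : Q → Q → Prop := fun p q =>
    q.2.1 < p.2.1 ∧ dist (pt q.1) (pt p.1) < (2⁻¹ : ℝ) ^ q.2.1 ∧
      ∀ w : Y, dist w (pt p.1) < 3 * (2⁻¹ : ℝ) ^ p.2.1 → f w (pair (p.2.2, q.2.2)) = false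
  have hQcard : #Q ≤ lam := by
    have h1 : #ι ≤ lam := le_trans (Cardinal.mk_subtype_mono fun s hs => hs.1) hBcard
    have h2 : #(ℕ × T lam) ≤ lam := by
      have he : #(ℕ × T lam) = ℵ₀ * lam := by
        simp [Cardinal.mk_prod, Cardinal.mk_ord_toType]
      rw [he]
      calc ℵ₀ * lam ≤ lam * lam := mul_le_mul' hinf le_rfl
        _ = lam := Cardinal.mul_eq_self hinf
    have hQeq : #Q = #ι * #(ℕ × T lam) := by
      simp [Q, Cardinal.mk_prod]
    calc #Q = #ι * #(ℕ × T lam) := hQeq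
      _ ≤ lam * lam := mul_le_mul' h1 h2
      _ = lam := Cardinal.mul_eq_self hinf
  -- basic facts about powers of 1/2
  have hhalf0 : (0 : ℝ) < 2⁻¹ := by norm_num
  have hhalf1 : (2⁻¹ : ℝ) < 1 := by norm_num
  have hpow_pos : ∀ n : ℕ, (0 : ℝ) < (2⁻¹ : ℝ) ^ n := fun n => pow_pos hhalf0 n
  have hpow_mono : ∀ {m n : ℕ}, m ≤ n → ((2⁻¹ : ℝ) ^ n ≤ (2⁻¹ : ℝ) ^ m) :=
    fun h => pow_le_pow_of_le_one (le_of_lt hhalf0) (le_of_lt hhalf1) h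
  -- R is well-founded
  have hwfR : WellFounded R := by
    apply wf_of_no_descending
    intro g hg
    set nseq : ℕ → ℕ := fun k => (g k).2.1 with hnseq
    set dseq : ℕ → Y := fun k => pt (g k).1 with hdseq
    set aseq : ℕ → T lam := fun k => (g k).2.2 with haseq
    have hmono : StrictMono nseq := strictMono_nat_of_lt_succ fun k => (hg k).1
    have hstep : ∀ k, dist (dseq k) (dseq (k + 1)) < (2⁻¹ : ℝ) ^ nseq k := fun k => (hg k).2.1
    have hnk : ∀ k, k ≤ nseq k := fun k => hmono.le_apply
    have hadd : ∀ m j, nseq m + j ≤ nseq (m + j) := by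
      intro m j
      induction j with
      | zero => simp
      | succ j IH =>
        have h1 : nseq (m + j) < nseq (m + j + 1) := hmono (by omega)
        have h2 : m + (j + 1) = (m + j) + 1 := rfl
        rw [h2]
        omega
    -- the point sequence is Cauchy
    have hcauchy : CauchySeq dseq := by
      apply cauchySeq_of_le_geometric (2⁻¹ : ℝ) 1 hhalf1
      intro k
      have := (hstep k).le.trans (hpow_mono (hnk k))
      simpa using this
    obtain ⟨ystar, hystar⟩ := cauchySeq_tendsto_of_complete hcauchy
    -- the limit is close to each point of the sequence
    have hclose : ∀ k, dist ystar (dseq (k + 1)) < 3 * (2⁻¹ : ℝ) ^ nseq (k + 1) := by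
      intro k
      have htail : dist (dseq (k + 1)) ystar ≤ ((2⁻¹ : ℝ) ^ nseq (k + 1)) / (1 - 2⁻¹) := by
        have hshift : Filter.Tendsto (fun j => dseq (j + (k + 1))) Filter.atTop (nhds ystar) :=
          hystar.comp (Filter.tendsto_add_atTop_nat (k + 1))
        have hd : ∀ j, dist (dseq (j + (k + 1))) (dseq (j + 1 + (k + 1))) ≤
            ((2⁻¹ : ℝ) ^ nseq (k + 1)) * (2⁻¹ : ℝ) ^ j := by
          intro j
          have h1 : dist (dseq (j + (k + 1))) (dseq (j + (k + 1) + 1)) <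
              (2⁻¹ : ℝ) ^ nseq (j + (k + 1)) := hstep _
          have h2 : (2⁻¹ : ℝ) ^ nseq (j + (k + 1)) ≤ (2⁻¹ : ℝ) ^ (nseq (k + 1) + j) := by
            apply hpow_mono
            have ha := hadd (k + 1) j
            have hc : j + (k + 1) = (k + 1) + j := by omega
            rw [hc]
            omega
          have h3 : ((2⁻¹ : ℝ) ^ (nseq (k + 1) + j)) =
              ((2⁻¹ : ℝ) ^ nseq (k + 1)) * (2⁻¹ : ℝ) ^ j := pow_add _ _ _
          have h4 : j + 1 + (k + 1) = j + (k + 1) + 1 := by omega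
          rw [h4]
          exact le_of_lt (h1.trans_le (h2.trans_eq h3))
        have := dist_le_of_le_geometric_of_tendsto₀ _ _ hhalf1 hd hshift
        simpa using this
      have h2 : ((2⁻¹ : ℝ) ^ nseq (k + 1)) / (1 - 2⁻¹) = 2 * (2⁻¹ : ℝ) ^ nseq (k + 1) := by
        ring
      rw [dist_comm]
      calc dist (dseq (k + 1)) ystar ≤ 2 * (2⁻¹ : ℝ) ^ nseq (k + 1) := by rw [← h2]; exact htail
        _ < 3 * (2⁻¹ : ℝ) ^ nseq (k + 1) := by
            have := hpow_pos (nseq (k + 1)); nlinarith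
    -- hence f ystar codes a relation with an infinite descending sequence
    have hEz : ∀ k, f ystar (pair (aseq (k + 1), aseq k)) = false := by
      intro k
      exact (hg k).2.2 ystar (hclose k)
    have hzA : f ystar ∈ A := by
      rw [← hrange]; exact Set.mem_range_self _
    obtain ⟨α₀, S₀, hfield₀, hwo₀, -⟩ := hWO _ hzA
    have hmem : ∀ k, aseq k ∈ S₀ := fun k => (hfield₀ _ _ (hEz k)).2
    let σ : ℕ → S₀ := fun k => ⟨aseq k, hmem k⟩
    haveI := hwo₀
    have hwf₀ : WellFounded (fun a b : S₀ => Ez pair (f ystar) a.1 b.1) :=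
      IsWellFounded.wf
    obtain ⟨mn, ⟨k, hk⟩, hminimal⟩ := hwf₀.has_min (Set.range σ) ⟨σ 0, 0, rfl⟩
    exact hminimal (σ (k + 1)) ⟨k + 1, rfl⟩ (by rw [← hk]; exact hEz k)
  haveI : IsWellFounded Q R := ⟨hwfR⟩
  -- the total rank bound
  let Λ : Ordinal.{u} := ⨆ q : Q, Order.succ (IsWellFounded.rank R q)
  have hordlim : Order.IsSuccLimit ((Order.succ lam).ord) :=
    Cardinal.isSuccLimit_ord (hinf.trans (Order.le_succ _))
  have hQcof : #Q < ((Order.succ lam).ord).cof := by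
    rw [(Cardinal.isRegular_succ hinf).cof_eq]
    exact lt_of_le_of_lt hQcard (Order.lt_succ lam)
  have hΛ : Λ < (Order.succ lam).ord := by
    apply Ordinal.iSup_lt_ord hQcof
    intro q
    exact hordlim.succ_lt (rank_lt_ord_succ R hinf hQcard q)
  -- get a code of order type > Λ
  obtain ⟨z, hzA, α, hβα, S, hfield, hwo, htype⟩ := hUnb (Order.succ Λ) (hordlim.succ_lt hΛ)
  obtain ⟨y, hy⟩ : z ∈ Set.range f := by rw [hrange]; exact hzA
  haveI := hwo
  -- the key inductive rank comparison
  have key : ∀ x : S, ∀ (i : ι) (n : ℕ), dist y (pt i) < (2⁻¹ : ℝ) ^ n / 2 →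
      IsWellFounded.rank (fun a b : S => Ez pair z a.1 b.1) x ≤
        IsWellFounded.rank R (i, n, x.1) := by
    intro x
    induction x using IsWellFounded.induction (fun a b : S => Ez pair z a.1 b.1) with
    | _ x IH =>
      intro i n hdi
      rw [IsWellFounded.rank_eq]
      rw [Ordinal.iSup_le_iff]
      rintro ⟨b, hb⟩
      rw [Order.succ_le_iff]
      -- find the open ball where the coordinate pair (b.1, x.1) of f is false
      have hbx : f y (pair (b.1, x.1)) = false := by
        have : Ez pair z b.1 x.1 := hb
        rw [← hy] at this
        exact this
      have hopen := @Continuous.isOpen_preimage Y (T lam → Bool) _ (btop lam) f hf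
        {g : T lam → Bool | g (pair (b.1, x.1)) = false} (btop_fiber_open hinf _ false)
      have hymem : y ∈ f ⁻¹' {g : T lam → Bool | g (pair (b.1, x.1)) = false} := hbx
      obtain ⟨r, hr, hball⟩ := Metric.isOpen_iff.1 hopen y hymem
      -- choose a much finer level n'
      obtain ⟨N, hN⟩ := exists_pow_lt_of_lt_one (by positivity : (0:ℝ) < r / 4) hhalf1
      set n' : ℕ := max N (n + 1) with hn'def
      have hn'N : (2⁻¹ : ℝ) ^ n' ≤ (2⁻¹ : ℝ) ^ N := hpow_mono (le_max_left _ _)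
      have hn'r : (2⁻¹ : ℝ) ^ n' < r / 4 := lt_of_le_of_lt hn'N hN
      have hnn' : n < n' := lt_of_lt_of_le (Nat.lt_succ_self n) (le_max_right _ _)
      have hn'n : (2⁻¹ : ℝ) ^ n' ≤ (2⁻¹ : ℝ) ^ n := hpow_mono (le_of_lt hnn')
      obtain ⟨i', hi'⟩ := hdense y ((2⁻¹ : ℝ) ^ n' / 2) (by positivity)
      -- the new node is R-below the old one
      have hRstep : R (i', n', b.1) (i, n, x.1) := by
        refine ⟨hnn', ?_, ?_⟩
        · calc dist (pt i) (pt i') ≤ dist (pt i) y + dist y (pt i') := dist_triangle _ _ _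
            _ < (2⁻¹ : ℝ) ^ n / 2 + (2⁻¹ : ℝ) ^ n' / 2 := by
                rw [dist_comm (pt i) y]
                exact add_lt_add hdi hi'
            _ ≤ (2⁻¹ : ℝ) ^ n / 2 + (2⁻¹ : ℝ) ^ n / 2 := by linarith
            _ = (2⁻¹ : ℝ) ^ n := by ring
        · intro w hw
          apply hball
          rw [Metric.mem_ball]
          calc dist w y ≤ dist w (pt i') + dist (pt i') y := dist_triangle _ _ _
            _ < 3 * (2⁻¹ : ℝ) ^ n' + (2⁻¹ : ℝ) ^ n' / 2 := by
                rw [dist_comm (pt i') y]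
                exact add_lt_add hw hi'
            _ ≤ 4 * (2⁻¹ : ℝ) ^ n' := by linarith [hpow_pos n']
            _ < 4 * (r / 4) := by linarith
            _ = r := by ring
      calc IsWellFounded.rank (fun a b : S => Ez pair z a.1 b.1) b ≤
            IsWellFounded.rank R (i', n', b.1) := IH b hb i' n' hi'
        _ < IsWellFounded.rank R (i, n, x.1) := IsWellFounded.rank_lt_of_rel hRstep
  -- now derive the contradiction
  have hΛlt : Λ < Ordinal.type (fun a b : S => Ez pair z a.1 b.1) := by
    rw [htype]
    exact lt_of_lt_of_le (Order.lt_succ Λ) hβα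
  obtain ⟨x, hx⟩ := Ordinal.typein_surj (fun a b : S => Ez pair z a.1 b.1) hΛlt
  obtain ⟨i0, hi0⟩ := hdense y ((2⁻¹ : ℝ) ^ 0 / 2) (by norm_num)
  have h1 : IsWellFounded.rank (fun a b : S => Ez pair z a.1 b.1) x ≤
      IsWellFounded.rank R (i0, 0, x.1) := key x i0 0 hi0
  have h2 : IsWellFounded.rank (fun a b : S => Ez pair z a.1 b.1) x = Λ := by
    rw [IsWellFounded.rank_eq_typein]
    exact hx
  have h3 : IsWellFounded.rank R (i0, 0, x.1) < Λ :=
    lt_of_lt_of_le (Order.lt_succ _) (Ordinal.le_iSup (fun q : Q => Order.succ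
      (IsWellFounded.rank R q)) (i0, 0, x.1))
  rw [h2] at h1
  exact absurd (lt_of_le_of_lt h1 h3) (lt_irrefl Λ)
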